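/- If G is a GP4-graph obtained from a connected graph H with vertex set {v_1,...,v_n} by adding, for each i, a path w_i, x_i, y_i, z_i attached to v_i (with edges v_i w_i, w_i x_i, x_i y_i, y_i z_i), then the semipaired domination number of G equals (2/5)|V(G)|, i.e. γ_{pr2}(G) = 2n. -/
import Mathlib


open SimpleGraph Finset

/-- `D` is a dominating set of `G`. -/
def Dominating {V : Type*} (G : SimpleGraph V) (D : Finset V) : Prop :=
  ∀ v : V, ∃ u ∈ D, u = v ∨ G.Adj u v

/-- `D` is a semipaired dominating set of `G`: a dominating set whose vertices can be
partitioned into pairs (via a fixed-point-free involution) at distance at most 2. -/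
def SemiPairedDom {V : Type*} (G : SimpleGraph V) (D : Finset V) : Prop :=
  Dominating G D ∧ ∃ f : V → V,
    (∀ u ∈ D, f u ∈ D) ∧ (∀ u ∈ D, f (f u) = u) ∧ (∀ u ∈ D, f u ≠ u) ∧
    (∀ u ∈ D, G.Adj u (f u) ∨ ∃ w, G.Adj u w ∧ G.Adj w (f u))

/-- `D` is a paired dominating set of `G`: a dominating set whose induced subgraph has a
perfect matching (encoded by a fixed-point-free involution pairing adjacent vertices). -/
def PairedDom {V : Type*} (G : SimpleGraph V) (D : Finset V) : Prop :=
  Dominating G D ∧ ∃ f : V → V,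
    (∀ u ∈ D, f u ∈ D) ∧ (∀ u ∈ D, f (f u) = u) ∧ (∀ u ∈ D, f u ≠ u) ∧
    (∀ u ∈ D, G.Adj u (f u))

/-- The domination number. -/
noncomputable def domNum (V : Type*) [Fintype V] (G : SimpleGraph V) : ℕ :=
  sInf {k : ℕ | ∃ D : Finset V, Dominating G D ∧ D.card = k}

/-- The semipaired domination number. -/
noncomputable def semiPairedDomNum (V : Type*) [Fintype V] (G : SimpleGraph V) : ℕ :=
  sInf {k : ℕ | ∃ D : Finset V, SemiPairedDom G D ∧ D.card = k}

/-- The paired domination number. -/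
noncomputable def pairedDomNum (V : Type*) [Fintype V] (G : SimpleGraph V) : ℕ :=
  sInf {k : ℕ | ∃ D : Finset V, PairedDom G D ∧ D.card = k}

/-- The GP4-graph obtained from `H` by attaching to each vertex `a` a path
`a – w_a – x_a – y_a – z_a`, where `w_a, x_a, y_a, z_a` are the vertices
`Sum.inr (a, 0), …, Sum.inr (a, 3)`. -/
def GP4 {α : Type*} (H : SimpleGraph α) : SimpleGraph (α ⊕ α × Fin 4) :=
  SimpleGraph.fromRel (fun u v =>
    (∃ a b, u = Sum.inl a ∧ v = Sum.inl b ∧ H.Adj a b) ∨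
    (∃ a, u = Sum.inl a ∧ v = Sum.inr (a, 0)) ∨
    (∃ (a : α) (j k : Fin 4), u = Sum.inr (a, j) ∧ v = Sum.inr (a, k) ∧ (k : ℕ) = (j : ℕ) + 1))


section GP4Aux
variable {α : Type*} [Fintype α] [DecidableEq α] (H : SimpleGraph α)

omit [Fintype α] [DecidableEq α] in
lemma gp4_adj_step (a : α) (j k : Fin 4) (h : (k : ℕ) = (j : ℕ) + 1) :
    (GP4 H).Adj (Sum.inr (a, j)) (Sum.inr (a, k)) := by
  rw [GP4, SimpleGraph.fromRel_adj]
  refine ⟨?_, Or.inl (Or.inr (Or.inr ⟨a, j, k, rfl, rfl, h⟩))⟩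
  intro he
  have : j = k := by simpa using he
  omega

omit [Fintype α] [DecidableEq α] in
lemma gp4_adj_vw (a : α) : (GP4 H).Adj (Sum.inl a) (Sum.inr (a, 0)) := by
  rw [GP4, SimpleGraph.fromRel_adj]
  exact ⟨by simp, Or.inl (Or.inr (Or.inl ⟨a, rfl, rfl⟩))⟩

omit [Fintype α] [DecidableEq α] in
lemma gp4_nbr (a : α) (j : Fin 4) (hj : 1 ≤ (j : ℕ))
    (u : α ⊕ α × Fin 4) (h : (GP4 H).Adj u (Sum.inr (a, j))) :
    ∃ k : Fin 4, u = Sum.inr (a, k) ∧ ((k : ℕ) + 1 = j ∨ (j : ℕ) + 1 = k) := by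
  rw [GP4, SimpleGraph.fromRel_adj] at h
  obtain ⟨hne, h | h⟩ := h
  · rcases h with ⟨a', b, _, hv, _⟩ | ⟨a', _, hv⟩ | ⟨a', j', k', hu, hv, hk⟩
    · exact absurd hv (by simp)
    · obtain ⟨ha, h0⟩ : a = a' ∧ j = 0 := by simpa using hv
      omega
    · obtain ⟨ha, hk'⟩ : a = a' ∧ j = k' := by simpa using hv
      subst ha; subst hk'
      exact ⟨j', hu, Or.inl hk.symm⟩
  · rcases h with ⟨a', b, hu, _, _⟩ | ⟨a', hu, _⟩ | ⟨a', j', k', hu, hv, hk⟩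
    · exact absurd hu (by simp)
    · exact absurd hu (by simp)
    · obtain ⟨ha, hj'⟩ : a = a' ∧ j = j' := by simpa using hu
      subst ha; subst hj'
      exact ⟨k', hv, Or.inr hk.symm⟩

/-- The standard semipaired dominating set `{w_a, y_a : a ∈ α}`. -/
def gp4Dset (α : Type*) [Fintype α] [DecidableEq α] : Finset (α ⊕ α × Fin 4) :=
  Finset.univ.image (fun a : α => Sum.inr (a, (0 : Fin 4))) ∪
  Finset.univ.image (fun a : α => Sum.inr (a, (2 : Fin 4)))

/-- The pairing involution swapping `w_a` and `y_a`. -/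
def gp4pairf {α : Type*} : α ⊕ α × Fin 4 → α ⊕ α × Fin 4 := fun u =>
  match u with
  | Sum.inr (a, j) =>
    if j = (0 : Fin 4) then Sum.inr (a, 2) else if j = 2 then Sum.inr (a, 0) else Sum.inr (a, j)
  | v => v

lemma mem_gp4Dset (u : α ⊕ α × Fin 4) :
    u ∈ gp4Dset α ↔ ∃ a, u = Sum.inr (a, (0 : Fin 4)) ∨ u = Sum.inr (a, (2 : Fin 4)) := by
  simp [gp4Dset, eq_comm, or_and_right, exists_or]

lemma gp4Dset_card : (gp4Dset α).card = 2 * Fintype.card α := by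
  rw [gp4Dset, Finset.card_union_of_disjoint, Finset.card_image_of_injective,
    Finset.card_image_of_injective, Finset.card_univ, two_mul]
  · intro a b h; simpa using h
  · intro a b h; simpa using h
  · simp only [Finset.disjoint_left, Finset.mem_image]
    rintro x ⟨a, -, rfl⟩ ⟨b, -, h⟩
    simp only [Sum.inr.injEq, Prod.mk.injEq] at h
    exact absurd h.2 (by decide)

lemma gp4_upper : SemiPairedDom (GP4 H) (gp4Dset α) := by
  constructor
  · rintro (a | ⟨a, j⟩)
    · exact ⟨Sum.inr (a, 0), (mem_gp4Dset _).2 ⟨a, Or.inl rfl⟩, Or.inr (gp4_adj_vw H a).symm⟩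
    · fin_cases j
      · exact ⟨Sum.inr (a, 0), (mem_gp4Dset _).2 ⟨a, Or.inl rfl⟩, Or.inl rfl⟩
      · exact ⟨Sum.inr (a, 0), (mem_gp4Dset _).2 ⟨a, Or.inl rfl⟩,
          Or.inr (gp4_adj_step H a 0 1 (by decide))⟩
      · exact ⟨Sum.inr (a, 2), (mem_gp4Dset _).2 ⟨a, Or.inr rfl⟩, Or.inl rfl⟩
      · exact ⟨Sum.inr (a, 2), (mem_gp4Dset _).2 ⟨a, Or.inr rfl⟩,
          Or.inr (gp4_adj_step H a 2 3 (by decide))⟩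
  · refine ⟨gp4pairf, ?_, ?_, ?_, ?_⟩
    · intro u hu
      obtain ⟨a, rfl | rfl⟩ := (mem_gp4Dset u).1 hu <;>
        simp only [gp4pairf, reduceIte] <;> exact (mem_gp4Dset _).2 ⟨a, by simp⟩
    · intro u hu
      obtain ⟨a, rfl | rfl⟩ := (mem_gp4Dset u).1 hu <;> simp [gp4pairf]
    · intro u hu
      obtain ⟨a, rfl | rfl⟩ := (mem_gp4Dset u).1 hu <;> simp [gp4pairf]
    · intro u hu
      obtain ⟨a, rfl | rfl⟩ := (mem_gp4Dset u).1 hu <;> simp only [gp4pairf, reduceIte]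
      · exact Or.inr ⟨Sum.inr (a, 1), gp4_adj_step H a 0 1 (by decide),
          gp4_adj_step H a 1 2 (by decide)⟩
      · exact Or.inr ⟨Sum.inr (a, 1), (gp4_adj_step H a 1 2 (by decide)).symm,
          (gp4_adj_step H a 0 1 (by decide)).symm⟩

lemma gp4_lower (D : Finset (α ⊕ α × Fin 4)) (hD : SemiPairedDom (GP4 H) D) :
    2 * Fintype.card α ≤ D.card := by
  obtain ⟨hdom, f, hfD, hff, hfne, hfd⟩ := hD
  set S : α → Finset (α ⊕ α × Fin 4) :=
    fun a => Finset.univ.image (fun j : Fin 4 => Sum.inr (a, j)) with hS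
  have key : ∀ a, 2 ≤ (D ∩ S a).card := by
    intro a
    obtain ⟨u, huD, hu⟩ := hdom (Sum.inr (a, 3))
    have hut : ∃ t : Fin 4, u = Sum.inr (a, t) ∧ 2 ≤ (t : ℕ) := by
      rcases hu with rfl | hadj
      · exact ⟨3, rfl, by decide⟩
      · obtain ⟨k, rfl, hk⟩ := gp4_nbr H a 3 (by decide) u hadj
        have h3 : ((3 : Fin 4) : ℕ) = 3 := rfl
        have hk4 : (k : ℕ) < 4 := k.isLt
        exact ⟨k, rfl, by omega⟩
    obtain ⟨t, rfl, ht⟩ := hut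
    have hfu : ∃ m : Fin 4, f (Sum.inr (a, t)) = Sum.inr (a, m) := by
      rcases hfd _ huD with hadj | ⟨w, h1, h2⟩
      · obtain ⟨k, hk, -⟩ := gp4_nbr H a t (by omega) _ hadj.symm
        exact ⟨k, hk⟩
      · obtain ⟨k, rfl, hk⟩ := gp4_nbr H a t (by omega) w h1.symm
        obtain ⟨m, hm, -⟩ := gp4_nbr H a k (by omega) _ h2.symm
        exact ⟨m, hm⟩
    obtain ⟨m, hm⟩ := hfu
    refine Finset.one_lt_card.2 ⟨Sum.inr (a, t), ?_, f (Sum.inr (a, t)), ?_, ?_⟩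
    · exact Finset.mem_inter.2 ⟨huD, Finset.mem_image.2 ⟨t, Finset.mem_univ _, rfl⟩⟩
    · exact Finset.mem_inter.2 ⟨hfD _ huD, hm ▸ Finset.mem_image.2 ⟨m, Finset.mem_univ _, rfl⟩⟩
    · exact (hfne _ huD).symm
  have hdisj : ∀ a ∈ (Finset.univ : Finset α), ∀ b ∈ (Finset.univ : Finset α), a ≠ b →
      Disjoint (D ∩ S a) (D ∩ S b) := by
    intro a _ b _ hab
    simp only [Finset.disjoint_left, Finset.mem_inter, Finset.mem_image, hS]
    rintro x ⟨-, j, -, rfl⟩ ⟨-, k, -, h⟩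
    simp only [Sum.inr.injEq, Prod.mk.injEq] at h
    exact hab h.1.symm
  calc 2 * Fintype.card α = ∑ _a : α, 2 := by simp [mul_comm]
    _ ≤ ∑ a : α, (D ∩ S a).card := Finset.sum_le_sum (fun a _ => key a)
    _ = (Finset.univ.biUnion (fun a => D ∩ S a)).card := (Finset.card_biUnion hdisj).symm
    _ ≤ D.card := Finset.card_le_card (by
        intro x hx
        obtain ⟨a, -, hx⟩ := Finset.mem_biUnion.1 hx
        exact (Finset.mem_inter.1 hx).1)

end GP4Aux

/-- If `G` is the GP4-graph of a connected graph `H` with `n` vertices,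
then `γ_{pr2}(G) = 2n = (2/5)|V(G)|`. -/
theorem gp4_semiPairedDomNum {α : Type*} [Fintype α] [DecidableEq α]
    (H : SimpleGraph α) (hH : H.Connected) :
    semiPairedDomNum (α ⊕ α × Fin 4) (GP4 H) = 2 * Fintype.card α := by
  apply le_antisymm
  · exact Nat.sInf_le ⟨gp4Dset α, gp4_upper H, gp4Dset_card⟩
  · refine le_csInf ⟨_, gp4Dset α, gp4_upper H, rfl⟩ ?_
    rintro k ⟨D, hD, rfl⟩
    exact gp4_lower H D hD
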